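/- Let K be a centrally symmetric, lattice-free closed convex set in ℝ² with non-empty interior, lattice width w and finite area A. Then A ≥ w²/2. -/

import Mathlib

open MeasureTheory

noncomputable def dot2 (u x : ℝ × ℝ) : ℝ := u.1 * x.1 + u.2 * x.2

noncomputable def widthFn (K : Set (ℝ × ℝ)) (u : ℝ × ℝ) : ℝ :=
  sSup (dot2 u '' K) - sInf (dot2 u '' K)

noncomputable def latticeWidth (K : Set (ℝ × ℝ)) : ℝ :=
  sInf {w | ∃ u : ℤ × ℤ, u ≠ 0 ∧ w = widthFn K ((u.1 : ℝ), (u.2 : ℝ))}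

def IsLatticePoint (p : ℝ × ℝ) : Prop := ∃ z : ℤ × ℤ, p = ((z.1 : ℝ), (z.2 : ℝ))

def LatticeFree (K : Set (ℝ × ℝ)) : Prop := ∀ p ∈ interior K, ¬ IsLatticePoint p

def CentrallySymmetric (K : Set (ℝ × ℝ)) : Prop := ∃ c : ℝ × ℝ, ∀ x, x ∈ K ↔ (2 : ℝ) • c - x ∈ K

def Covers (t : ℝ) (K : Set (ℝ × ℝ)) : Prop :=
  ∀ p : ℝ × ℝ, ∃ x ∈ K, ∃ z : ℤ × ℤ, p = t • x + ((z.1 : ℝ), (z.2 : ℝ))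

noncomputable def mu2 (K : Set (ℝ × ℝ)) : ℝ := sInf {t : ℝ | 0 ≤ t ∧ Covers t K}

def MeetsAllLines (t : ℝ) (K : Set (ℝ × ℝ)) : Prop :=
  ∀ p v : ℝ × ℝ, v ≠ 0 → ∃ s : ℝ, ∃ x ∈ K, ∃ z : ℤ × ℤ,
    p + s • v = t • x + ((z.1 : ℝ), (z.2 : ℝ))

noncomputable def mu1 (K : Set (ℝ × ℝ)) : ℝ := sInf {t : ℝ | 0 ≤ t ∧ MeetsAllLines t K}

section SalHelpers

open Set
open scoped ENNReal Pointwise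

noncomputable def crs (p q : ℝ × ℝ) : ℝ := p.1 * q.2 - p.2 * q.1

noncomputable def salMap (p q : ℝ × ℝ) : (ℝ × ℝ) →ₗ[ℝ] (ℝ × ℝ) :=
  Matrix.toLin (Module.Basis.finTwoProd ℝ) (Module.Basis.finTwoProd ℝ) !![p.1, q.1; p.2, q.2]

lemma salMap_apply (p q : ℝ × ℝ) (s t : ℝ) : salMap p q (s, t) = s • p + t • q := by
  simp only [salMap, Matrix.toLin_finTwoProd_apply, Prod.ext_iff, Prod.smul_fst, Prod.smul_snd,
    Prod.fst_add, Prod.snd_add, smul_eq_mul]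
  constructor <;> ring

lemma salMap_det (p q : ℝ × ℝ) : LinearMap.det (salMap p q) = crs p q := by
  rw [salMap, ← LinearMap.det_toMatrix (Module.Basis.finTwoProd ℝ), LinearMap.toMatrix_toLin,
    Matrix.det_fin_two]
  simp [crs]; ring

lemma salMap_image_vol (p q : ℝ × ℝ) (s : Set (ℝ × ℝ)) :
    volume (salMap p q '' s) = ENNReal.ofReal |crs p q| * volume s := by
  rw [Measure.addHaar_image_linearMap, salMap_det]

lemma sal_sq_vol : volume (Icc (-(1/2):ℝ) (1/2) ×ˢ Icc (-(1/2):ℝ) (1/2)) = 1 := by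
  rw [Measure.volume_eq_prod, Measure.prod_prod, Real.volume_Icc]
  norm_num

lemma sal_line_null (w : ℝ × ℝ) (hw : w ≠ 0) (k : ℝ) :
    volume {x : ℝ × ℝ | crs x w = k} = 0 := by
  have hw' : w.1 ≠ 0 ∨ w.2 ≠ 0 := by
    by_contra hc
    push_neg at hc
    exact hw (Prod.ext hc.1 hc.2)
  have hn : 0 < w.1 ^ 2 + w.2 ^ 2 := by
    rcases hw' with h1 | h1 <;> positivity
  set x₀ : ℝ × ℝ := (-k / (w.1 ^ 2 + w.2 ^ 2)) • (-w.2, w.1) with hx₀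
  have hx₀1 : x₀.1 = (-k / (w.1 ^ 2 + w.2 ^ 2)) * (-w.2) := rfl
  have hx₀2 : x₀.2 = (-k / (w.1 ^ 2 + w.2 ^ 2)) * w.1 := rfl
  have hx₀k : crs x₀ w = k := by
    simp only [crs, hx₀1, hx₀2]
    field_simp
    ring
  have hset : {x : ℝ × ℝ | crs x w = k} = (AffineSubspace.mk' x₀ (ℝ ∙ w) : Set (ℝ × ℝ)) := by
    ext x
    simp only [mem_setOf_eq, SetLike.mem_coe, AffineSubspace.mem_mk',
      Submodule.mem_span_singleton]
    constructor
    · intro hx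
      have hcr : (x.1 - x₀.1) * w.2 - (x.2 - x₀.2) * w.1 = 0 := by
        simp only [crs] at hx hx₀k; nlinarith [hx, hx₀k]
      rcases ne_or_eq w.1 0 with h1 | h1
      · refine ⟨(x.1 - x₀.1) / w.1, ?_⟩
        have h2 : (x.2 - x₀.2) * w.1 = (x.1 - x₀.1) * w.2 := by linarith
        apply Prod.ext
        · show (x.1 - x₀.1) / w.1 * w.1 = (x -ᵥ x₀).1
          have : (x -ᵥ x₀).1 = x.1 - x₀.1 := rfl
          rw [this]; field_simp
        · show (x.1 - x₀.1) / w.1 * w.2 = (x -ᵥ x₀).2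
          have : (x -ᵥ x₀).2 = x.2 - x₀.2 := rfl
          rw [this]; field_simp; linarith
      · have h2 : w.2 ≠ 0 := by
          rcases hw' with h | h
          · exact absurd h1 h
          · exact h
        refine ⟨(x.2 - x₀.2) / w.2, ?_⟩
        apply Prod.ext
        · show (x.2 - x₀.2) / w.2 * w.1 = (x -ᵥ x₀).1
          have h3 : (x -ᵥ x₀).1 = x.1 - x₀.1 := rfl
          rw [h3, h1, mul_zero]
          rw [h1] at hcr
          have h5 : (x.1 - x₀.1) * w.2 = 0 := by linarith
          rcases mul_eq_zero.mp h5 with h6 | h6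
          · linarith
          · exact absurd h6 h2
        · show (x.2 - x₀.2) / w.2 * w.2 = (x -ᵥ x₀).2
          have h3 : (x -ᵥ x₀).2 = x.2 - x₀.2 := rfl
          rw [h3]; field_simp
    · rintro ⟨t, ht⟩
      have h1 : t * w.1 = x.1 - x₀.1 := congrArg Prod.fst ht
      have h2 : t * w.2 = x.2 - x₀.2 := congrArg Prod.snd ht
      simp only [crs] at hx₀k ⊢
      linear_combination -w.2 * h1 + w.1 * h2 + hx₀k
  rw [hset]
  apply Measure.addHaar_affineSubspace
  intro htop
  have hz : x₀ + (-w.2, w.1) ∈ (AffineSubspace.mk' x₀ (ℝ ∙ w) : Set (ℝ × ℝ)) := by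
    rw [htop]; trivial
  rw [SetLike.mem_coe, AffineSubspace.mem_mk', Submodule.mem_span_singleton] at hz
  rcases hz with ⟨t, ht⟩
  have h1 : t * w.1 = (x₀ + (-w.2, w.1)).1 - x₀.1 := congrArg Prod.fst ht
  have h2 : t * w.2 = (x₀ + (-w.2, w.1)).2 - x₀.2 := congrArg Prod.snd ht
  simp only [Prod.fst_add, Prod.snd_add] at h1 h2
  have hz2 : w.1 ^ 2 + w.2 ^ 2 = 0 := by linear_combination w.2 * h1 - w.1 * h2
  linarith


section HexSection
variable {L : Set (ℝ × ℝ)}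

def stdTri : Set (ℝ × ℝ) := {x | 0 ≤ x.1 ∧ 0 ≤ x.2 ∧ x.1 + x.2 ≤ 1}

lemma stdTri_compact : IsCompact stdTri := by
  apply IsCompact.of_isClosed_subset (isCompact_Icc (a := ((0:ℝ), (0:ℝ))) (b := (1, 1)))
  · exact (isClosed_le continuous_const continuous_fst).inter
      ((isClosed_le continuous_const continuous_snd).inter
        (isClosed_le (continuous_fst.add continuous_snd) continuous_const))
  · rintro ⟨x1, x2⟩ ⟨h1, h2, h3⟩
    simp only [Set.mem_Icc, Prod.mk_le_mk] at *
    exact ⟨⟨h1, h2⟩, by constructor <;> linarith⟩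

lemma salMap_apply' (p q : ℝ × ℝ) (z : ℝ × ℝ) : salMap p q z = z.1 • p + z.2 • q := by
  have := salMap_apply p q z.1 z.2
  rwa [Prod.mk.eta] at this

lemma measure_image_const_add (c : ℝ × ℝ) (s : Set (ℝ × ℝ)) :
    volume ((fun z => c + z) '' s) = volume s := by
  rw [Set.image_add_left, measure_preimage_add]

lemma stdTri_vol : volume stdTri = 1 / 2 := by
  set T' : Set (ℝ × ℝ) := {y | y.1 ≤ 1 ∧ y.2 ≤ 1 ∧ 1 ≤ y.1 + y.2} with hT'
  have himg : T' = (fun z => ((1:ℝ), (1:ℝ)) + z) '' (salMap (0, -1) (-1, 0) '' stdTri) := by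
    rw [Set.image_image]
    ext ⟨y1, y2⟩
    simp only [hT', mem_setOf_eq, mem_image]
    constructor
    · intro ⟨h1, h2, h3⟩
      refine ⟨(1 - y2, 1 - y1), ⟨by simpa using h2, by simpa using h1, by simp; linarith⟩, ?_⟩
      rw [salMap_apply]
      simp only [Prod.smul_mk, smul_eq_mul, Prod.mk_add_mk, Prod.mk.injEq]
      constructor <;> ring
    · rintro ⟨⟨s, t⟩, ⟨hs, ht, hst⟩, heq⟩
      rw [salMap_apply] at heq
      simp only [stdTri, mem_setOf_eq] at hs ht hst
      simp only [Prod.smul_mk, smul_eq_mul, Prod.mk_add_mk, Prod.mk.injEq] at heq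
      obtain ⟨e1, e2⟩ := heq
      have hs' : (0:ℝ) ≤ s := hs
      have ht' : (0:ℝ) ≤ t := ht
      have hst' : s + t ≤ 1 := hst
      exact ⟨by linarith, by linarith, by linarith⟩
  have hvolT' : volume T' = volume stdTri := by
    rw [himg, measure_image_const_add, salMap_image_vol]
    simp [crs]
  have hunion : stdTri ∪ T' = Icc (0:ℝ) 1 ×ˢ Icc (0:ℝ) 1 := by
    ext ⟨x1, x2⟩
    simp only [mem_union, stdTri, hT', mem_setOf_eq, mem_prod, mem_Icc]
    constructor
    · rintro (⟨h1, h2, h3⟩ | ⟨h1, h2, h3⟩) <;> exact ⟨⟨by linarith, by linarith⟩, by linarith, by linarith⟩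
    · rintro ⟨⟨h1, h2⟩, h3, h4⟩
      rcases le_total (x1 + x2) 1 with h | h
      · left; exact ⟨h1, h3, h⟩
      · right; exact ⟨h2, h4, h⟩
  have hinter : volume (stdTri ∩ T') = 0 := by
    apply measure_mono_null (t := {x : ℝ × ℝ | crs x (-1, 1) = 1})
    · rintro ⟨x1, x2⟩ ⟨⟨_, _, h3⟩, _, _, h6⟩
      simp only [mem_setOf_eq, crs]
      linarith
    · exact sal_line_null (-1, 1) (fun h => by simpa using congrArg Prod.fst h) 1
  have hTm : NullMeasurableSet T' (volume : Measure (ℝ × ℝ)) := by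
    have hcpt : IsCompact T' := by
      rw [himg]
      exact ((stdTri_compact.image (salMap (0,-1) (-1,0)).continuous_of_finiteDimensional).image
        (continuous_add_left _))
    exact hcpt.isClosed.measurableSet.nullMeasurableSet
  have hsq : volume (stdTri ∪ T') = 1 := by
    rw [hunion, Measure.volume_eq_prod, Measure.prod_prod, Real.volume_Icc]
    norm_num
  have hadd : volume stdTri + volume T' = 1 := by
    rw [← measure_union₀ hTm hinter, hsq]
  rw [hvolT'] at hadd
  have h2 : (2 : ℝ≥0∞) * volume stdTri = 1 := by rw [two_mul]; exact hadd
  exact (ENNReal.eq_div_iff two_ne_zero (by norm_num)).mpr h2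

noncomputable def salTri (p q : ℝ × ℝ) : Set (ℝ × ℝ) := salMap p q '' stdTri

lemma salTri_vol (p q : ℝ × ℝ) : volume (salTri p q) = ENNReal.ofReal |crs p q| * (1 / 2) := by
  rw [salTri, salMap_image_vol, stdTri_vol]

noncomputable def salPar (p q : ℝ × ℝ) : Set (ℝ × ℝ) :=
  salMap (p + q) (p - q) '' (Icc (-(1/2):ℝ) (1/2) ×ˢ Icc (-(1/2):ℝ) (1/2))

lemma salPar_vol (p q : ℝ × ℝ) : volume (salPar p q) = ENNReal.ofReal (2 * |crs p q|) := by
  rw [salPar, salMap_image_vol, sal_sq_vol, mul_one]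
  congr 1
  have h : crs (p + q) (p - q) = -2 * crs p q := by simp [crs]; ring
  rw [h, abs_mul]
  norm_num

lemma combo_mem (hconv : Convex ℝ L) (hsym : ∀ x ∈ L, -x ∈ L) (h0 : (0:ℝ×ℝ) ∈ L)
    {p q : ℝ × ℝ} (hp : p ∈ L) (hq : q ∈ L) {α β : ℝ} (h : |α| + |β| ≤ 1) :
    α • p + β • q ∈ L := by
  set p' : ℝ × ℝ := if 0 ≤ α then p else -p with hp'
  set q' : ℝ × ℝ := if 0 ≤ β then q else -q with hq'
  have hp'm : p' ∈ L := by rw [hp']; split_ifs; exacts [hp, hsym p hp]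
  have hq'm : q' ∈ L := by rw [hq']; split_ifs; exacts [hq, hsym q hq]
  have key : α • p + β • q = ∑ i : Fin 3, (![|α|, |β|, 1 - |α| - |β|] i) • (![p', q', 0] i) := by
    rw [Fin.sum_univ_three]
    simp only [Matrix.cons_val_zero, Matrix.cons_val_one, Matrix.head_cons, Matrix.cons_val_two,
      Matrix.tail_cons, smul_zero, add_zero, hp', hq']
    congr 1
    · split_ifs with h'
      · rw [abs_of_nonneg h']
      · rw [abs_of_neg (lt_of_not_ge h'), neg_smul, smul_neg, neg_neg]
    · split_ifs with h'
      · rw [abs_of_nonneg h']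
      · rw [abs_of_neg (lt_of_not_ge h'), neg_smul, smul_neg, neg_neg]
  rw [key]
  apply hconv.sum_mem
  · intro i _
    fin_cases i
    · simpa using abs_nonneg α
    · simpa using abs_nonneg β
    · simpa using (by linarith [abs_nonneg α, abs_nonneg β] : (0:ℝ) ≤ 1 - |α| - |β|)
  · rw [Fin.sum_univ_three]
    simp only [Matrix.cons_val_zero, Matrix.cons_val_one, Matrix.head_cons, Matrix.cons_val_two,
      Matrix.tail_cons]
    ring
  · intro i _
    fin_cases i
    · exact hp'm
    · exact hq'm
    · exact h0

lemma abs_comb {s t : ℝ} (hs1 : -(1/2) ≤ s) (hs2 : s ≤ 1/2) (ht1 : -(1/2) ≤ t) (ht2 : t ≤ 1/2) :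
    |s + t| + |s - t| ≤ 1 := by
  rcases abs_cases (s + t) with ⟨h1, _⟩ | ⟨h1, _⟩ <;> rcases abs_cases (s - t) with ⟨h2, _⟩ | ⟨h2, _⟩ <;>
    rw [h1, h2] <;> linarith

lemma salPar_subset (hconv : Convex ℝ L) (hsym : ∀ x ∈ L, -x ∈ L) (h0 : (0:ℝ×ℝ) ∈ L)
    {p q : ℝ × ℝ} (hp : p ∈ L) (hq : q ∈ L) : salPar p q ⊆ L := by
  rintro x ⟨⟨s, t⟩, ⟨hs, ht⟩, rfl⟩
  rw [salMap_apply]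
  have hx : s • (p + q) + t • (p - q) = (s + t) • p + (s - t) • q := by
    simp only [smul_add, smul_sub, add_smul, sub_smul]
    abel
  rw [hx]
  exact combo_mem hconv hsym h0 hp hq (abs_comb hs.1 hs.2 ht.1 ht.2)

lemma combo3_mem (hconv : Convex ℝ L) {x y z : ℝ × ℝ} (hx : x ∈ L) (hy : y ∈ L) (hz : z ∈ L)
    {a b c : ℝ} (ha : 0 ≤ a) (hb : 0 ≤ b) (hc : 0 ≤ c) (habc : a + b + c = 1) :
    a • x + b • y + c • z ∈ L := by
  have key : a • x + b • y + c • z = ∑ i : Fin 3, (![a, b, c] i) • (![x, y, z] i) := by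
    rw [Fin.sum_univ_three]
    simp only [Matrix.cons_val_zero, Matrix.cons_val_one, Matrix.head_cons, Matrix.cons_val_two,
      Matrix.tail_cons]
  rw [key]
  apply hconv.sum_mem
  · intro i _
    fin_cases i
    · exact ha
    · exact hb
    · exact hc
  · rw [Fin.sum_univ_three]
    simpa using habc
  · intro i _
    fin_cases i
    · exact hx
    · exact hy
    · exact hz

lemma crs_comp (x w : ℝ × ℝ) : crs x w = x.1 * w.2 - x.2 * w.1 := rfl

lemma sal_hex (hconv : Convex ℝ L) (hsym : ∀ x ∈ L, -x ∈ L) (h0 : (0:ℝ×ℝ) ∈ L)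
    {p q r : ℝ × ℝ} (hp : p ∈ L) (hq : q ∈ L) (hr : r ∈ L) :
    ENNReal.ofReal (crs p q + crs q r - crs r p) ≤ volume L := by
  set E := crs p q + crs q r - crs r p with hE
  rcases le_or_gt E 0 with hE0 | hE0
  · rw [ENNReal.ofReal_eq_zero.2 hE0]
    exact zero_le
  have pair : ∀ x ∈ L, ∀ y ∈ L, E ≤ 2 * |crs x y| → ENNReal.ofReal E ≤ volume L := by
    intro x hx y hy hle
    calc ENNReal.ofReal E ≤ ENNReal.ofReal (2 * |crs x y|) := ENNReal.ofReal_le_ofReal hle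
      _ = volume (salPar x y) := (salPar_vol x y).symm
      _ ≤ volume L := measure_mono (salPar_subset hconv hsym h0 hx hy)
  rcases le_or_gt (crs p q) 0 with hc | hc
  · rcases le_total |crs r p| |crs q r| with hm | hm
    · exact pair q hq r hr (by rcases abs_cases (crs q r) with ⟨h1,_⟩|⟨h1,_⟩ <;> rcases abs_cases (crs r p) with ⟨h2,_⟩|⟨h2,_⟩ <;> linarith)
    · exact pair r hr p hp (by rcases abs_cases (crs q r) with ⟨h1,_⟩|⟨h1,_⟩ <;> rcases abs_cases (crs r p) with ⟨h2,_⟩|⟨h2,_⟩ <;> linarith)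
  rcases le_or_gt (crs q r - crs r p - crs p q) 0 with hs | hs
  · exact pair p hp q hq (by rcases abs_cases (crs p q) with ⟨h1,_⟩|⟨h1,_⟩ <;> linarith)
  -- main case
  set w : ℝ × ℝ := -p - q with hw
  have hwne : w ≠ 0 := by
    intro h
    have hq' : q = -p := by
      have h1 : w.1 = 0 := by rw [h]; rfl
      have h2 : w.2 = 0 := by rw [h]; rfl
      have e1 : -p.1 - q.1 = 0 := h1
      have e2 : -p.2 - q.2 = 0 := h2
      exact Prod.ext (show q.1 = (-p).1 by simp; linarith) (show q.2 = (-p).2 by simp; linarith)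
    rw [hq'] at hc
    simp only [crs, Prod.fst_neg, Prod.snd_neg] at hc
    nlinarith [hc]
  set P := salPar p q with hP
  set Tp := (fun z => q + z) '' salTri (r - q) w with hTp
  set Tm := (fun z => -z) '' Tp with hTm
  -- subset facts
  have hPL : P ⊆ L := salPar_subset hconv hsym h0 hp hq
  have hTpL : Tp ⊆ L := by
    rintro x ⟨y, ⟨⟨s, t⟩, ⟨hs0, ht0, hst⟩, rfl⟩, rfl⟩
    show q + (salMap (r - q) w) (s, t) ∈ L
    rw [salMap_apply]
    have hs0' : (0:ℝ) ≤ s := hs0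
    have ht0' : (0:ℝ) ≤ t := ht0
    have hst' : s + t ≤ 1 := hst
    have hxe : q + (s • (r - q) + t • w) = (1 - s - t) • q + s • r + t • (-p) := by
      rw [hw]
      simp only [smul_sub, smul_add, sub_smul, one_smul, smul_neg]
      abel
    rw [hxe]
    exact combo3_mem hconv hq hr (hsym p hp) (by linarith) hs0' ht0' (by ring)
  have hTmL : Tm ⊆ L := by
    rintro x ⟨y, hy, rfl⟩
    exact hsym y (hTpL hy)
  -- crs bounds
  have hPb : ∀ x ∈ P, -crs p q ≤ crs x w ∧ crs x w ≤ crs p q := by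
    rintro x ⟨⟨s, t⟩, ⟨hsI, htI⟩, rfl⟩
    rw [salMap_apply]
    have ht1 : -(1/2) ≤ t := htI.1
    have ht2 : t ≤ 1/2 := htI.2
    have hcrs : crs (s • (p + q) + t • (p - q)) w = -2 * t * crs p q := by
      rw [hw]
      simp only [crs, Prod.fst_add, Prod.snd_add, Prod.fst_sub, Prod.snd_sub, Prod.fst_neg,
        Prod.snd_neg, Prod.smul_fst, Prod.smul_snd, smul_eq_mul]
      ring
    rw [hcrs]
    constructor <;> nlinarith [hc.le]
  have hTpb : ∀ x ∈ Tp, crs p q ≤ crs x w := by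
    rintro x ⟨y, ⟨⟨s, t⟩, ⟨hs0, ht0, hst⟩, rfl⟩, rfl⟩
    show crs p q ≤ crs (q + (salMap (r - q) w) (s, t)) w
    rw [salMap_apply]
    have hs0' : (0:ℝ) ≤ s := hs0
    have hcrs : crs (q + (s • (r - q) + t • w)) w
        = crs p q + s * (crs q r - crs r p - crs p q) := by
      rw [hw]
      simp only [crs, Prod.fst_add, Prod.snd_add, Prod.fst_sub, Prod.snd_sub, Prod.fst_neg,
        Prod.snd_neg, Prod.smul_fst, Prod.smul_snd, smul_eq_mul]
      ring
    rw [hcrs]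
    nlinarith [hs.le]
  have hTmb : ∀ x ∈ Tm, crs x w ≤ -crs p q := by
    rintro x ⟨y, hy, rfl⟩
    have := hTpb y hy
    have hneg : crs (-y) w = -crs y w := by
      simp only [crs, Prod.fst_neg, Prod.snd_neg]
      ring
    rw [hneg]
    linarith
  -- measurability
  have hTpc : IsCompact Tp := ((stdTri_compact.image
    (salMap (r - q) w).continuous_of_finiteDimensional).image (continuous_add_left q))
  have hTmc : IsCompact Tm := hTpc.image continuous_neg
  have mTp : NullMeasurableSet Tp (volume : Measure (ℝ×ℝ)) :=
    hTpc.isClosed.measurableSet.nullMeasurableSet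
  have mTm : NullMeasurableSet Tm (volume : Measure (ℝ×ℝ)) :=
    hTmc.isClosed.measurableSet.nullMeasurableSet
  -- volumes
  have hTpv : volume Tp = ENNReal.ofReal (crs q r - crs r p - crs p q) * (1 / 2) := by
    rw [hTp, measure_image_const_add, salTri_vol]
    congr 2
    have : crs (r - q) w = crs q r - crs r p - crs p q := by
      rw [hw]
      simp only [crs, Prod.fst_sub, Prod.snd_sub, Prod.fst_neg, Prod.snd_neg, Prod.fst_add, Prod.snd_add]
      ring
    rw [this, abs_of_pos hs]
  have hTmv : volume Tm = volume Tp := by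
    have himg : Tm = salMap (-1, 0) (0, -1) '' Tp := by
      rw [hTm]
      apply Set.image_congr'
      intro z
      rw [salMap_apply']
      simp [Prod.ext_iff]
    rw [himg, salMap_image_vol]
    have : crs ((-1:ℝ), (0:ℝ)) ((0:ℝ), (-1:ℝ)) = 1 := by simp [crs]
    rw [this]
    simp
  have hPv : volume P = ENNReal.ofReal (2 * crs p q) := by
    rw [hP, salPar_vol, abs_of_pos hc]
  -- disjointness
  have d1 : AEDisjoint volume P Tp := by
    apply measure_mono_null (t := {x : ℝ × ℝ | crs x w = crs p q})
    · rintro x ⟨hx1, hx2⟩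
      exact le_antisymm (hPb x hx1).2 (hTpb x hx2)
    · exact sal_line_null w hwne (crs p q)
  have d2 : AEDisjoint volume P Tm := by
    apply measure_mono_null (t := {x : ℝ × ℝ | crs x w = -crs p q})
    · rintro x ⟨hx1, hx2⟩
      exact le_antisymm (hTmb x hx2) (hPb x hx1).1
    · exact sal_line_null w hwne (-crs p q)
  have d3 : AEDisjoint volume Tp Tm := by
    apply Disjoint.aedisjoint
    rw [Set.disjoint_left]
    intro x hx1 hx2
    have := hTpb x hx1
    have := hTmb x hx2
    linarith
  -- assemble
  have hsum : volume (P ∪ (Tp ∪ Tm)) = volume P + (volume Tp + volume Tm) := by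
    rw [measure_union₀ (mTp.union mTm) (AEDisjoint.union_right d1 d2),
      measure_union₀ mTm d3]
  have hEeq : E = 2 * crs p q + (crs q r - crs r p - crs p q) := by rw [hE]; ring
  calc ENNReal.ofReal E
      = ENNReal.ofReal (2 * crs p q) + ENNReal.ofReal (crs q r - crs r p - crs p q) := by
        rw [hEeq, ENNReal.ofReal_add (by linarith) hs.le]
    _ = volume P + (volume Tp + volume Tm) := by
        rw [hPv, hTpv, hTmv, hTpv]
        congr 1
        rw [← mul_add, one_div, ENNReal.inv_two_add_inv_two, mul_one]
    _ = volume (P ∪ (Tp ∪ Tm)) := hsum.symm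
    _ ≤ volume L := measure_mono (by
        intro x hx
        rcases hx with hx | hx | hx
        · exact hPL hx
        · exact hTpL hx
        · exact hTmL hx)

end HexSection

lemma key_arith (m hv a b r1 r2 : ℝ) (hm : 0 < m) (h1 : m ≤ hv) (h2 : 0 ≤ a) (h3 : a ≤ m/2)
    (h4 : -m ≤ b) (h5 : b ≤ m) (h6 : -m ≤ r2) (h7 : r2 ≤ m) (h8 : -hv ≤ r1) (h9 : r1 ≤ hv)
    (h10 : m ≤ r1 - r2) (h11 : hv - b ≤ r1 - r2) :
    2*m^2 ≤ (r1*b - r2*hv) + (hv*m - a*b) - (a*r2 - m*r1) := by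
  nlinarith [mul_nonneg (sub_nonneg.2 h10) (by linarith : (0:ℝ) ≤ b + m),
    mul_nonneg (by linarith : (0:ℝ) ≤ r1 - r2 - (hv - b)) (by linarith : (0:ℝ) ≤ m - r2),
    mul_nonneg (by linarith : (0:ℝ) ≤ hv - r1) (by linarith : (0:ℝ) ≤ m - b),
    mul_nonneg (by linarith : (0:ℝ) ≤ hv - r1) (by linarith : (0:ℝ) ≤ m - r2),
    mul_nonneg h2 (by linarith : (0:ℝ) ≤ m - b),
    mul_nonneg h2 (by linarith : (0:ℝ) ≤ m - r2),
    mul_nonneg h2 (by linarith : (0:ℝ) ≤ b + m),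
    mul_nonneg h2 (by linarith : (0:ℝ) ≤ r2 + m),
    mul_nonneg (by linarith : (0:ℝ) ≤ m/2 - a) (by linarith : (0:ℝ) ≤ m - b),
    mul_nonneg (by linarith : (0:ℝ) ≤ m/2 - a) (by linarith : (0:ℝ) ≤ r2 + m),
    mul_nonneg (by linarith : (0:ℝ) ≤ hv - m) (by linarith : (0:ℝ) ≤ m - r2),
    mul_nonneg (by linarith : (0:ℝ) ≤ r1 + hv) (by linarith : (0:ℝ) ≤ b + m),
    mul_nonneg (sub_nonneg.2 h10) (by linarith : (0:ℝ) ≤ m - b),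
    mul_nonneg (by linarith : (0:ℝ) ≤ r1 - r2 - (hv - b)) (by linarith : (0:ℝ) ≤ r2 + m)]

lemma sal_bounded {K : Set (ℝ × ℝ)} (hconv : Convex ℝ K) (x₀ : ℝ × ℝ) (r : ℝ) (hr : 0 < r)
    (hball : Metric.ball x₀ r ⊆ K) (hfin : volume K ≠ ⊤) : Bornology.IsBounded K := by
  by_contra hub
  have key : ∀ n : ℕ, (n : ℝ≥0∞) * volume (Metric.ball (0 : ℝ × ℝ) (r / 2)) ≤ volume K := by
    intro n
    obtain ⟨y, hyK, hyfar⟩ : ∃ y ∈ K, 4 * r * (n + 1) < dist y x₀ := by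
      by_contra hno
      push_neg at hno
      exact hub ((Metric.isBounded_iff_subset_closedBall x₀).2
        ⟨4 * r * (n + 1), fun y hy => Metric.mem_closedBall.2 (hno y hy)⟩)
    set d := dist y x₀ with hd
    have hd0 : (0:ℝ) < d := lt_of_le_of_lt (by positivity) hyfar
    set cf : ℕ → ℝ × ℝ := fun i => x₀ + ((2 * r * i) / d) • (y - x₀) with hcf
    have htle : ∀ i : ℕ, i < n → (2 * r * i) / d ≤ 1 / 2 := by
      intro i hi
      rw [div_le_iff₀ hd0]
      have h1 : (i:ℝ) ≤ n := by exact_mod_cast hi.le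
      nlinarith [hyfar, hr]
    have ht0 : ∀ i : ℕ, (0:ℝ) ≤ (2 * r * i) / d := by
      intro i; positivity
    have hsub : ∀ i : ℕ, i < n → Metric.ball (cf i) (r / 2) ⊆ K := by
      intro i hi z hz
      set t := (2 * r * i) / d with htdef
      have ht1 : t ≤ 1 / 2 := htle i hi
      have ht2 : (0:ℝ) ≤ t := ht0 i
      have h1t : (0:ℝ) < 1 - t := by linarith
      set b := x₀ + (1 / (1 - t)) • (z - cf i) with hb
      have hbmem : b ∈ Metric.ball x₀ r := by
        rw [Metric.mem_ball, hb, dist_eq_norm]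
        have : x₀ + (1 / (1 - t)) • (z - cf i) - x₀ = (1 / (1 - t)) • (z - cf i) := by abel
        rw [this, norm_smul]
        have hzd : ‖z - cf i‖ < r / 2 := by
          rw [← dist_eq_norm]; exact Metric.mem_ball.1 hz
        have habs : |1 / (1 - t)| = 1 / (1 - t) := abs_of_pos (by positivity)
        rw [Real.norm_eq_abs, habs]
        rw [div_mul_eq_mul_div, one_mul, div_lt_iff₀ h1t]
        nlinarith
      have hfact : (1 - t) • ((1 / (1 - t)) • (z - cf i)) = z - cf i := by
        rw [smul_smul, mul_one_div, div_self h1t.ne', one_smul]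
      have hzeq : z = (1 - t) • b + t • y := by
        rw [hb, smul_add, hfact]
        have hcfi : cf i = x₀ + t • (y - x₀) := rfl
        rw [hcfi]
        simp only [smul_sub, sub_smul, one_smul]
        abel
      rw [hzeq]
      exact hconv (hball hbmem) hyK (by linarith) ht2 (by ring)
    have hdisj : (↑(Finset.range n) : Set ℕ).PairwiseDisjoint
        (fun i => Metric.ball (cf i) (r / 2)) := by
      intro i hi j hj hij
      apply Metric.ball_disjoint_ball
      have hdij : dist (cf i) (cf j) = 2 * r * |(i:ℝ) - j| := by
        rw [hcf, dist_eq_norm]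
        have : x₀ + ((2 * r * i) / d) • (y - x₀) - (x₀ + ((2 * r * j) / d) • (y - x₀))
            = (((2 * r * i) / d) - ((2 * r * j) / d)) • (y - x₀) := by
          rw [sub_smul]; abel
        rw [this, norm_smul, Real.norm_eq_abs]
        have hnyx : ‖y - x₀‖ = d := by rw [← dist_eq_norm, hd]
        rw [hnyx, div_sub_div_same, abs_div, abs_of_pos hd0, div_mul_eq_mul_div,
          mul_div_assoc, div_self hd0.ne', mul_one]
        rw [show 2 * r * (i:ℝ) - 2 * r * (j:ℝ) = 2 * r * ((i:ℝ) - j) by ring, abs_mul,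
          abs_of_pos (by positivity : (0:ℝ) < 2 * r)]
      have hone : (1:ℝ) ≤ |(i:ℝ) - j| := by
        have hij' : i ≠ j := hij
        rcases lt_or_gt_of_ne hij' with h | h
        · have h1 : (i:ℝ) + 1 ≤ j := by exact_mod_cast Nat.succ_le_of_lt h
          rw [abs_sub_comm, abs_of_nonneg (by linarith)]
          linarith
        · have h1 : (j:ℝ) + 1 ≤ i := by exact_mod_cast Nat.succ_le_of_lt h
          rw [abs_of_nonneg (by linarith)]
          linarith
      rw [hdij]
      nlinarith
    calc (n : ℝ≥0∞) * volume (Metric.ball (0 : ℝ × ℝ) (r / 2))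
        = ∑ i ∈ Finset.range n, volume (Metric.ball (cf i) (r / 2)) := by
          rw [Finset.sum_congr rfl (fun i _ => Measure.addHaar_ball_center volume (cf i) (r/2))]
          rw [Finset.sum_const, Finset.card_range, nsmul_eq_mul]
      _ = volume (⋃ i ∈ Finset.range n, Metric.ball (cf i) (r / 2)) :=
          (measure_biUnion_finset hdisj (fun i _ => measurableSet_ball)).symm
      _ ≤ volume K := by
          apply measure_mono
          intro z hz
          simp only [mem_iUnion, Finset.mem_range] at hz
          obtain ⟨i, hi, hzi⟩ := hz
          exact hsub i hi hzi
  have hV0 : volume (Metric.ball (0 : ℝ × ℝ) (r / 2)) ≠ 0 :=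
    (Metric.measure_ball_pos volume 0 (by positivity)).ne'
  obtain ⟨m, hm⟩ := ENNReal.exists_nat_gt hfin
  obtain ⟨k, hk⟩ := ENNReal.exists_inv_nat_lt hV0
  have hk0 : (k : ℝ≥0∞) ≠ 0 := by
    intro h
    rw [h] at hk
    simp at hk
  have hcontr := key (m * k)
  have hge : (m : ℝ≥0∞) ≤ (↑(m * k) : ℝ≥0∞) * volume (Metric.ball (0 : ℝ × ℝ) (r / 2)) := by
    push_cast
    calc (m : ℝ≥0∞) = (m : ℝ≥0∞) * ((k : ℝ≥0∞) * (k : ℝ≥0∞)⁻¹) := by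
          rw [ENNReal.mul_inv_cancel hk0 (ENNReal.natCast_ne_top k), mul_one]
      _ ≤ (m : ℝ≥0∞) * ((k : ℝ≥0∞) * volume (Metric.ball (0 : ℝ × ℝ) (r / 2))) := by
          gcongr

      _ = (m : ℝ≥0∞) * (k : ℝ≥0∞) * volume (Metric.ball (0 : ℝ × ℝ) (r / 2)) := by
          rw [mul_assoc]
  exact absurd (le_trans hge hcontr) (not_le.2 hm)

lemma sal_sSup_shift (S : Set ℝ) (hne : S.Nonempty) (hb : BddAbove S) (k : ℝ) :
    sSup ((fun x => x + k) '' S) = sSup S + k := by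
  have hbi : BddAbove ((fun x => x + k) '' S) := by
    obtain ⟨M, hM⟩ := hb
    exact ⟨M + k, by rintro _ ⟨x, hx, rfl⟩; exact add_le_add_left (hM hx) k⟩
  apply le_antisymm
  · apply csSup_le (hne.image _)
    rintro _ ⟨x, hx, rfl⟩
    exact add_le_add_left (le_csSup hb hx) k
  · have h1 : sSup S ≤ sSup ((fun x => x + k) '' S) - k := by
      apply csSup_le hne
      intro x hx
      have := le_csSup hbi (Set.mem_image_of_mem _ hx)
      linarith
    linarith

lemma sal_sInf_shift (S : Set ℝ) (hne : S.Nonempty) (hb : BddBelow S) (k : ℝ) :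
    sInf ((fun x => x + k) '' S) = sInf S + k := by
  have hbi : BddBelow ((fun x => x + k) '' S) := by
    obtain ⟨M, hM⟩ := hb
    exact ⟨M + k, by rintro _ ⟨x, hx, rfl⟩; exact add_le_add_left (hM hx) k⟩
  apply le_antisymm
  · have h1 : sInf ((fun x => x + k) '' S) - k ≤ sInf S := by
      apply le_csInf hne
      intro x hx
      have := csInf_le hbi (Set.mem_image_of_mem _ hx)
      linarith
    linarith
  · apply le_csInf (hne.image _)
    rintro _ ⟨x, hx, rfl⟩
    exact add_le_add_left (csInf_le hb hx) k

lemma dot2_cont (u : ℝ × ℝ) : Continuous (dot2 u) :=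
  (continuous_const.mul continuous_fst).add (continuous_const.mul continuous_snd)

theorem sym_area_lower (K : Set (ℝ × ℝ)) (hK : IsClosed K) (hconv : Convex ℝ K)
    (hne : (interior K).Nonempty) (hsym : CentrallySymmetric K) (hfree : LatticeFree K)
    (hfin : MeasureTheory.volume K ≠ ⊤) :
    latticeWidth K ^ 2 / 2 ≤ (MeasureTheory.volume K).toReal := by
  classical
  obtain ⟨c, hsymc⟩ := hsym
  obtain ⟨x₀, hx₀⟩ := hne
  obtain ⟨r, hr, hball⟩ : ∃ r > 0, Metric.ball x₀ r ⊆ K := by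
    rcases Metric.mem_nhds_iff.1 (mem_interior_iff_mem_nhds.1 hx₀) with ⟨r, hr, h⟩
    exact ⟨r, hr, h⟩
  have hbdd : Bornology.IsBounded K := sal_bounded hconv x₀ r hr hball hfin
  -- the translated body L
  set L : Set (ℝ × ℝ) := (fun z => c + z) ⁻¹' K with hLdef
  have hmemL : ∀ x : ℝ × ℝ, x ∈ L ↔ c + x ∈ K := fun x => Iff.rfl
  have hLconv : Convex ℝ L := by
    intro x hx y hy α β hα hβ hαβ
    show c + (α • x + β • y) ∈ K
    have hxK : c + x ∈ K := hx
    have hyK : c + y ∈ K := hy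
    have h2 : α • c + β • c = c := by rw [← add_smul, hαβ, one_smul]
    have heq : c + (α • x + β • y) = α • (c + x) + β • (c + y) := by
      rw [smul_add, smul_add]
      conv_lhs => rw [← h2]
      abel
    rw [heq]
    exact hconv hxK hyK hα hβ hαβ
  have hLsym : ∀ x ∈ L, -x ∈ L := by
    intro x hx
    show c + -x ∈ K
    have hxK : c + x ∈ K := hx
    have h2 : (2:ℝ) • c - (c + x) = c + -x := by
      rw [two_smul]; abel
    rw [← h2]
    exact (hsymc (c + x)).1 hxK
  have hcK : c ∈ K := by
    have h1 : x₀ ∈ K := interior_subset hx₀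
    have h2 : (2:ℝ) • c - x₀ ∈ K := (hsymc x₀).1 h1
    have h3 : (1/2 : ℝ) • x₀ + (1/2 : ℝ) • ((2:ℝ) • c - x₀) ∈ K :=
      hconv h1 h2 (by norm_num) (by norm_num) (by norm_num)
    have h4 : (1/2 : ℝ) • x₀ + (1/2 : ℝ) • ((2:ℝ) • c - x₀) = c := by
      rw [smul_sub, smul_smul]
      norm_num
    rwa [h4] at h3
  have hL0 : (0 : ℝ × ℝ) ∈ L := by
    rw [hmemL, add_zero]
    exact hcK
  have hLne : L.Nonempty := ⟨0, hL0⟩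
  have hLclosed : IsClosed L := hK.preimage (continuous_add_left c)
  have hLbdd : Bornology.IsBounded L := by
    obtain ⟨R, hR⟩ := hbdd.subset_closedBall 0
    apply Bornology.IsBounded.subset (Metric.isBounded_closedBall (x := (0:ℝ×ℝ)) (r := R + ‖c‖))
    intro x hx
    rw [hmemL] at hx
    have := hR hx
    rw [Metric.mem_closedBall, dist_zero_right] at this ⊢
    calc ‖x‖ = ‖(c + x) - c‖ := by rw [add_sub_cancel_left]
      _ ≤ ‖c + x‖ + ‖c‖ := norm_sub_le _ _
      _ ≤ R + ‖c‖ := by linarith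
  have hLcompact : IsCompact L := Metric.isCompact_iff_isClosed_bounded.2 ⟨hLclosed, hLbdd⟩
  have hLvol : volume L = volume K := by
    rw [hLdef, measure_preimage_add]
  -- ball inside L
  set y₀ : ℝ × ℝ := x₀ - c with hy₀
  have hballL : Metric.ball y₀ r ⊆ L := by
    intro z hz
    rw [hmemL]
    apply hball
    rw [Metric.mem_ball] at *
    have : c + z - x₀ = z - y₀ := by rw [hy₀]; abel
    rw [dist_eq_norm, this, ← dist_eq_norm]
    exact hz
  -- support function facts
  have hmax : ∀ u : ℝ × ℝ, ∃ X ∈ L, (∀ z ∈ L, dot2 u z ≤ dot2 u X) ∧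
      sSup (dot2 u '' L) = dot2 u X := by
    intro u
    obtain ⟨X, hXL, hXmax⟩ := hLcompact.exists_isMaxOn hLne (dot2_cont u).continuousOn
    have hall : ∀ z ∈ L, dot2 u z ≤ dot2 u X := fun z hz => hXmax hz
    refine ⟨X, hXL, hall, ?_⟩
    apply IsGreatest.csSup_eq
    exact ⟨⟨X, hXL, rfl⟩, by rintro _ ⟨z, hz, rfl⟩; exact hall z hz⟩
  have hbddA : ∀ u : ℝ × ℝ, BddAbove (dot2 u '' L) := by
    intro u
    obtain ⟨X, hXL, hall, _⟩ := hmax u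
    exact ⟨dot2 u X, by rintro _ ⟨z, hz, rfl⟩; exact hall z hz⟩
  have hbddB : ∀ u : ℝ × ℝ, BddBelow (dot2 u '' L) := by
    intro u
    obtain ⟨X, hXL, hall, _⟩ := hmax (-u)
    refine ⟨-dot2 (-u) X, ?_⟩
    rintro _ ⟨z, hz, rfl⟩
    have := hall z hz
    simp only [dot2, Prod.fst_neg, Prod.snd_neg] at this ⊢
    nlinarith [this]
  have himg_neg : ∀ u : ℝ × ℝ, dot2 u '' L = -(dot2 u '' L) := by
    intro u
    ext t
    simp only [Set.mem_neg]
    constructor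
    · rintro ⟨z, hz, rfl⟩
      refine ⟨-z, hLsym z hz, ?_⟩
      simp only [dot2, Prod.fst_neg, Prod.snd_neg]
      ring
    · rintro ⟨z, hz, hzt⟩
      refine ⟨-z, hLsym z hz, ?_⟩
      simp only [dot2, Prod.fst_neg, Prod.snd_neg] at hzt ⊢
      linarith
  have hsInfL : ∀ u : ℝ × ℝ, sInf (dot2 u '' L) = -sSup (dot2 u '' L) := by
    intro u
    rw [Real.sInf_def, ← himg_neg u]
  -- width over K equals width over L equals 2 * sSup
  have himgK : ∀ u : ℝ × ℝ, dot2 u '' K = (fun t => t + dot2 u c) '' (dot2 u '' L) := by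
    intro u
    ext t
    constructor
    · rintro ⟨x, hx, rfl⟩
      refine ⟨dot2 u (x - c), ⟨x - c, ?_, rfl⟩, ?_⟩
      · rw [hmemL]
        have : c + (x - c) = x := by abel
        rwa [this]
      · simp only [dot2, Prod.fst_sub, Prod.snd_sub]
        ring
    · rintro ⟨_, ⟨z, hz, rfl⟩, rfl⟩
      rw [hmemL] at hz
      refine ⟨c + z, hz, ?_⟩
      simp only [dot2, Prod.fst_add, Prod.snd_add]
      ring
  have hwidth : ∀ u : ℝ × ℝ, widthFn K u = 2 * sSup (dot2 u '' L) := by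
    intro u
    rw [widthFn, himgK u, sal_sSup_shift _ (hLne.image _) (hbddA u) _,
      sal_sInf_shift _ (hLne.image _) (hbddB u) _, hsInfL u]
    ring
  -- width lower bounds
  have hwge : ∀ u : ℝ × ℝ, r * |u.1| ≤ widthFn K u ∧ r * |u.2| ≤ widthFn K u := by
    intro u
    have hin : ∀ e : ℝ × ℝ, ‖e‖ ≤ 1 → y₀ + (r/2) • e ∈ L := by
      intro e he
      apply hballL
      rw [Metric.mem_ball, dist_eq_norm]
      have heq : y₀ + (r/2) • e - y₀ = (r/2) • e := by abel
      rw [heq, norm_smul, Real.norm_eq_abs, abs_of_pos (by positivity : (0:ℝ) < r/2)]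
      nlinarith [he, norm_nonneg e]
    have key : ∀ e : ℝ × ℝ, ‖e‖ ≤ 1 → r / 2 * dot2 u e ≤ sSup (dot2 u '' L) := by
      intro e he
      have h1 : y₀ + (r/2) • e ∈ L := hin e he
      have h2 : -y₀ + (r/2) • e ∈ L := by
        have h3 : y₀ + (r/2) • (-e) ∈ L := hin (-e) (by rw [norm_neg]; exact he)
        have := hLsym _ h3
        have heq : -(y₀ + (r/2) • (-e)) = -y₀ + (r/2) • e := by
          rw [smul_neg]
          abel
        rwa [heq] at this
      have h4 := le_csSup (hbddA u) (Set.mem_image_of_mem _ h1)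
      have h5 := le_csSup (hbddA u) (Set.mem_image_of_mem _ h2)
      have he1 : dot2 u (y₀ + (r/2) • e) = dot2 u y₀ + (r/2) * dot2 u e := by
        simp only [dot2, Prod.fst_add, Prod.snd_add, Prod.smul_fst, Prod.smul_snd, smul_eq_mul]
        ring
      have he2 : dot2 u (-y₀ + (r/2) • e) = -dot2 u y₀ + (r/2) * dot2 u e := by
        simp only [dot2, Prod.fst_add, Prod.snd_add, Prod.fst_neg, Prod.snd_neg, Prod.smul_fst,
          Prod.smul_snd, smul_eq_mul]
        ring
      rw [he1] at h4
      rw [he2] at h5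
      linarith
    constructor
    · have h1 := key ((if 0 ≤ u.1 then 1 else -1), 0) (by split_ifs <;> simp [Prod.norm_def])
      rw [hwidth u]
      have : dot2 u ((if 0 ≤ u.1 then 1 else -1), 0) = |u.1| := by
        simp only [dot2]
        split_ifs with h
        · rw [abs_of_nonneg h]; ring
        · rw [abs_of_neg (lt_of_not_ge h)]; ring
      rw [this] at h1
      linarith
    · have h1 := key (0, (if 0 ≤ u.2 then 1 else -1)) (by split_ifs <;> simp [Prod.norm_def])
      rw [hwidth u]
      have : dot2 u (0, (if 0 ≤ u.2 then 1 else -1)) = |u.2| := by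
        simp only [dot2]
        split_ifs with h
        · rw [abs_of_nonneg h]; ring
        · rw [abs_of_neg (lt_of_not_ge h)]; ring
      rw [this] at h1
      linarith
  have hint_ge : ∀ u : ℤ × ℤ, u ≠ 0 → r ≤ widthFn K ((u.1 : ℝ), (u.2 : ℝ)) := by
    intro u hu
    have h1 : u.1 ≠ 0 ∨ u.2 ≠ 0 := by
      by_contra h
      push_neg at h
      exact hu (Prod.ext h.1 h.2)
    rcases h1 with h | h
    · have h2 : (1:ℝ) ≤ |(u.1 : ℝ)| := by
        rw [← Int.cast_abs]
        exact_mod_cast Int.one_le_abs h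
      have := (hwge ((u.1 : ℝ), (u.2 : ℝ))).1
      simp only at this
      nlinarith
    · have h2 : (1:ℝ) ≤ |(u.2 : ℝ)| := by
        rw [← Int.cast_abs]
        exact_mod_cast Int.one_le_abs h
      have := (hwge ((u.1 : ℝ), (u.2 : ℝ))).2
      simp only at this
      nlinarith
  -- lattice width minimizer
  set W : Set ℝ := {w | ∃ u : ℤ × ℤ, u ≠ 0 ∧ w = widthFn K ((u.1 : ℝ), (u.2 : ℝ))} with hWdef
  have hWne : W.Nonempty := by
    refine ⟨widthFn K (((1:ℤ):ℝ), ((0:ℤ):ℝ)), ⟨(1, 0), ?_, rfl⟩⟩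
    intro h
    exact one_ne_zero (congrArg Prod.fst h)
  have hWlb : ∀ w ∈ W, r ≤ w := by rintro w ⟨u, hu, rfl⟩; exact hint_ge u hu
  have hWbdd : BddBelow W := ⟨r, hWlb⟩
  have hlw : latticeWidth K = sInf W := rfl
  have hwpos : 0 < latticeWidth K := lt_of_lt_of_le hr (by rw [hlw]; exact le_csInf hWne hWlb)
  have hlw_le : ∀ u : ℤ × ℤ, u ≠ 0 → latticeWidth K ≤ widthFn K ((u.1:ℝ), (u.2:ℝ)) := by
    intro u hu
    rw [hlw]
    exact csInf_le hWbdd ⟨u, hu, rfl⟩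
  set B := latticeWidth K + 1 with hBdef
  set S : Set (ℤ × ℤ) := {u | u ≠ 0 ∧ widthFn K ((u.1:ℝ), (u.2:ℝ)) ≤ B} with hSdef
  have hSne : S.Nonempty := by
    obtain ⟨w, hwW, hwlt⟩ := exists_lt_of_csInf_lt hWne
      (show sInf W < B by rw [← hlw, hBdef]; linarith)
    obtain ⟨u, hu, rfl⟩ := hwW
    exact ⟨u, hu, hwlt.le⟩
  have hSfin : S.Finite := by
    set N : ℤ := ⌈B / r⌉ with hNdef
    apply Set.Finite.subset (Finset.finite_toSet (Finset.Icc ((-N, -N) : ℤ × ℤ) (N, N)))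
    rintro u ⟨hu, hub⟩
    have h1 : r * |(u.1:ℝ)| ≤ widthFn K ((u.1:ℝ), (u.2:ℝ)) := (hwge ((u.1:ℝ), (u.2:ℝ))).1
    have h2 : r * |(u.2:ℝ)| ≤ widthFn K ((u.1:ℝ), (u.2:ℝ)) := (hwge ((u.1:ℝ), (u.2:ℝ))).2
    have hBr : B / r ≤ (N:ℝ) := by
      rw [hNdef]
      exact_mod_cast Int.le_ceil (B / r)
    have hcast : ∀ z : ℤ, r * |(z:ℝ)| ≤ B → |z| ≤ N := by
      intro z hz
      have h3 : |(z:ℝ)| ≤ B / r := by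
        rw [le_div_iff₀ hr]
        linarith [hz]
      have h4 : |(z:ℝ)| ≤ (N:ℝ) := le_trans h3 hBr
      exact_mod_cast (by rwa [← Int.cast_abs] at h4 : ((|z| : ℤ) : ℝ) ≤ (N:ℝ))
    have hb1 := hcast u.1 (le_trans h1 hub)
    have hb2 := hcast u.2 (le_trans h2 hub)
    rw [Finset.coe_Icc, Set.mem_Icc]
    obtain ⟨hb1a, hb1b⟩ := abs_le.mp hb1
    obtain ⟨hb2a, hb2b⟩ := abs_le.mp hb2
    exact ⟨⟨hb1a, hb2a⟩, ⟨hb1b, hb2b⟩⟩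
  obtain ⟨u₀, hu₀S, hu₀min⟩ := Set.exists_min_image S
    (fun u => widthFn K ((u.1:ℝ), (u.2:ℝ))) hSfin hSne
  have hu₀ne : u₀ ≠ 0 := hu₀S.1
  have hu₀w : widthFn K ((u₀.1:ℝ), (u₀.2:ℝ)) = latticeWidth K := by
    apply le_antisymm
    · by_contra hgt
      push_neg at hgt
      obtain ⟨w, hwW, hwlt⟩ := exists_lt_of_csInf_lt hWne
        (show sInf W < widthFn K ((u₀.1:ℝ), (u₀.2:ℝ)) from lt_of_le_of_lt (hlw ▸ le_refl _) hgt)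
      obtain ⟨u₁, hu₁, rfl⟩ := hwW
      have hle : widthFn K ((u₁.1:ℝ), (u₁.2:ℝ)) ≤ B := le_trans hwlt.le hu₀S.2
      exact absurd hwlt (not_lt.2 (hu₀min u₁ ⟨hu₁, hle⟩))
    · exact hlw_le u₀ hu₀ne
  -- scaling
  have hscale : ∀ (g : ℤ) (u : ℤ × ℤ), 0 < g →
      widthFn K (((g * u.1 : ℤ) : ℝ), ((g * u.2 : ℤ) : ℝ))
        = (g:ℝ) * widthFn K ((u.1:ℝ), (u.2:ℝ)) := by
    intro g u hg
    have hgR : (0:ℝ) ≤ (g:ℝ) := by exact_mod_cast hg.le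
    have himg : dot2 (((g * u.1 : ℤ) : ℝ), ((g * u.2 : ℤ) : ℝ)) '' K
        = (g:ℝ) • (dot2 ((u.1:ℝ), (u.2:ℝ)) '' K) := by
      ext t
      simp only [Set.mem_smul_set, mem_image]
      constructor
      · rintro ⟨x, hx, rfl⟩
        refine ⟨dot2 ((u.1:ℝ), (u.2:ℝ)) x, ⟨x, hx, rfl⟩, ?_⟩
        simp only [dot2, smul_eq_mul]
        push_cast
        ring
      · rintro ⟨t', ⟨x, hx, rfl⟩, rfl⟩
        refine ⟨x, hx, ?_⟩
        simp only [dot2, smul_eq_mul]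
        push_cast
        ring
    rw [widthFn, widthFn, himg, Real.sSup_smul_of_nonneg hgR, Real.sInf_smul_of_nonneg hgR,
      smul_eq_mul, smul_eq_mul]
    ring
  -- primitivity
  have hgcd : Int.gcd u₀.1 u₀.2 = 1 := by
    by_contra hg1
    have hg0 : Int.gcd u₀.1 u₀.2 ≠ 0 := by
      intro h
      obtain ⟨h1, h2⟩ := Int.gcd_eq_zero_iff.mp h
      exact hu₀ne (Prod.ext h1 h2)
    have hg2 : 2 ≤ (Int.gcd u₀.1 u₀.2 : ℤ) := by omega
    set gz : ℤ := (Int.gcd u₀.1 u₀.2 : ℤ) with hgz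
    set u₁ : ℤ × ℤ := (u₀.1 / gz, u₀.2 / gz) with hu₁def
    have he1 : gz * u₁.1 = u₀.1 := Int.mul_ediv_cancel' (Int.gcd_dvd_left _ _)
    have he2 : gz * u₁.2 = u₀.2 := Int.mul_ediv_cancel' (Int.gcd_dvd_right _ _)
    have hu₁ne : u₁ ≠ 0 := by
      intro h
      apply hu₀ne
      have h1 : u₁.1 = 0 := congrArg Prod.fst h
      have h2 : u₁.2 = 0 := congrArg Prod.snd h
      apply Prod.ext
      · rw [← he1, h1, mul_zero]; rfl
      · rw [← he2, h2, mul_zero]; rfl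
    have hsc := hscale gz u₁ (by omega)
    rw [he1, he2] at hsc
    have hle : latticeWidth K ≤ widthFn K ((u₁.1:ℝ), (u₁.2:ℝ)) := hlw_le u₁ hu₁ne
    have hgR : (2:ℝ) ≤ (gz:ℝ) := by exact_mod_cast hg2
    nlinarith [hwpos, hu₀w, hsc, hle, hgR]
  -- Bezout
  obtain ⟨pc, qc, hpq⟩ := Int.isCoprime_iff_gcd_eq_one.mpr hgcd
  -- the quantity m
  set m : ℝ := latticeWidth K / 2 with hmdef
  have hmpos : 0 < m := by rw [hmdef]; linarith
  obtain ⟨X, hXL, hXmax, hXsup⟩ := hmax ((u₀.1:ℝ), (u₀.2:ℝ))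
  have hXm : dot2 ((u₀.1:ℝ), (u₀.2:ℝ)) X = m := by
    have h1 := hwidth ((u₀.1:ℝ), (u₀.2:ℝ))
    rw [hXsup] at h1
    rw [hu₀w] at h1
    rw [hmdef]
    linarith
  -- dot2 helper identities
  have hdot_neg : ∀ (u z : ℝ × ℝ), dot2 u (-z) = -dot2 u z := by
    intro u z
    simp only [dot2, Prod.fst_neg, Prod.snd_neg]
    ring
  -- shear : choose k
  set a₀ : ℝ := dot2 ((qc:ℝ), ((-pc:ℤ):ℝ)) X with ha₀def
  set k : ℤ := ⌊a₀ / m + 1 / 2⌋ with hkdef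
  set v₁ : ℤ × ℤ := (qc - k * u₀.1, -pc - k * u₀.2) with hv₁def
  have hdet₁ : v₁.1 * u₀.2 - v₁.2 * u₀.1 = 1 := by
    rw [hv₁def]
    simp only
    ring_nf
    linarith [hpq]
  have ha₁ : dot2 ((v₁.1:ℝ), (v₁.2:ℝ)) X = a₀ - (k:ℝ) * m := by
    rw [← hXm, ha₀def, hv₁def]
    simp only [dot2]
    push_cast
    ring
  have hkb1 : (k:ℝ) ≤ a₀ / m + 1 / 2 := Int.floor_le _
  have hkb2 : a₀ / m + 1 / 2 < (k:ℝ) + 1 := Int.lt_floor_add_one _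
  have ha₁b1 : -(m/2) ≤ dot2 ((v₁.1:ℝ), (v₁.2:ℝ)) X := by
    rw [ha₁]
    have := mul_le_mul_of_nonneg_right hkb1 hmpos.le
    rw [add_mul, div_mul_cancel₀ _ hmpos.ne'] at this
    linarith
  have ha₁b2 : dot2 ((v₁.1:ℝ), (v₁.2:ℝ)) X ≤ m/2 := by
    rw [ha₁]
    have := mul_le_mul_of_nonneg_right hkb2.le hmpos.le
    rw [add_mul, add_mul, div_mul_cancel₀ _ hmpos.ne', one_mul] at this
    linarith
  -- sign normalization
  obtain ⟨v, e, hdet, hepm, ha0, ham⟩ :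
      ∃ (v : ℤ × ℤ) (e : ℤ), (v.1 * u₀.2 - v.2 * u₀.1 = e) ∧ (e = 1 ∨ e = -1) ∧
        0 ≤ dot2 ((v.1:ℝ), (v.2:ℝ)) X ∧ dot2 ((v.1:ℝ), (v.2:ℝ)) X ≤ m / 2 := by
    rcases le_or_gt 0 (dot2 ((v₁.1:ℝ), (v₁.2:ℝ)) X) with h | h
    · exact ⟨v₁, 1, hdet₁, Or.inl rfl, h, ha₁b2⟩
    · refine ⟨(-v₁.1, -v₁.2), -1, ?_, Or.inr rfl, ?_, ?_⟩
      · simp only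
        linarith [hdet₁]
      · have heq : dot2 (((-v₁.1:ℤ):ℝ), ((-v₁.2:ℤ):ℝ)) X = -dot2 ((v₁.1:ℝ), (v₁.2:ℝ)) X := by
          simp only [dot2]
          push_cast
          ring
        rw [heq]
        linarith
      · have heq : dot2 (((-v₁.1:ℤ):ℝ), ((-v₁.2:ℤ):ℝ)) X = -dot2 ((v₁.1:ℝ), (v₁.2:ℝ)) X := by
          simp only [dot2]
          push_cast
          ring
        rw [heq]
        linarith
  have heR : ((e:ℤ):ℝ) = 1 ∨ ((e:ℤ):ℝ) = -1 := by
    rcases hepm with h | h <;> [left; right] <;> rw [h] <;> norm_num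
  have hene : e ≠ 0 := by rcases hepm with h | h <;> omega
  have hvne : v ≠ 0 := by
    intro h
    apply hene
    have h1 : v.1 = 0 := congrArg Prod.fst h
    have h2 : v.2 = 0 := congrArg Prod.snd h
    rw [← hdet, h1, h2]
    ring
  set d : ℤ × ℤ := (v.1 - u₀.1, v.2 - u₀.2) with hddef
  have hdne : d ≠ 0 := by
    intro h
    apply hene
    have h1 : d.1 = 0 := congrArg Prod.fst h
    have h2 : d.2 = 0 := congrArg Prod.snd h
    rw [hddef] at h1 h2
    simp only at h1 h2
    rw [← hdet]
    have hv1 : v.1 = u₀.1 := by linarith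
    have hv2 : v.2 = u₀.2 := by linarith
    rw [hv1, hv2]
    ring
  obtain ⟨Y, hYL, hYmax, hYsup⟩ := hmax ((v.1:ℝ), (v.2:ℝ))
  obtain ⟨Z, hZL, hZmax, hZsup⟩ := hmax ((d.1:ℝ), (d.2:ℝ))
  -- values
  have hv_ge : m ≤ dot2 ((v.1:ℝ), (v.2:ℝ)) Y := by
    have h1 := hwidth ((v.1:ℝ), (v.2:ℝ))
    rw [hYsup] at h1
    have h2 := hlw_le v hvne
    rw [hmdef]
    linarith
  have hd_ge : m ≤ dot2 ((d.1:ℝ), (d.2:ℝ)) Z := by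
    have h1 := hwidth ((d.1:ℝ), (d.2:ℝ))
    rw [hZsup] at h1
    have h2 := hlw_le d hdne
    rw [hmdef]
    linarith
  have hu₀bound : ∀ z ∈ L, -m ≤ dot2 ((u₀.1:ℝ), (u₀.2:ℝ)) z ∧ dot2 ((u₀.1:ℝ), (u₀.2:ℝ)) z ≤ m := by
    intro z hz
    constructor
    · have := hXmax (-z) (hLsym z hz)
      rw [hdot_neg, hXm] at this
      linarith
    · have := hXmax z hz
      rw [hXm] at this
      exact this
  have hvbound : ∀ z ∈ L, -dot2 ((v.1:ℝ), (v.2:ℝ)) Y ≤ dot2 ((v.1:ℝ), (v.2:ℝ)) z ∧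
      dot2 ((v.1:ℝ), (v.2:ℝ)) z ≤ dot2 ((v.1:ℝ), (v.2:ℝ)) Y := by
    intro z hz
    constructor
    · have := hYmax (-z) (hLsym z hz)
      rw [hdot_neg] at this
      linarith
    · exact hYmax z hz
  have hdsub : ∀ z : ℝ × ℝ, dot2 ((d.1:ℝ), (d.2:ℝ)) z
      = dot2 ((v.1:ℝ), (v.2:ℝ)) z - dot2 ((u₀.1:ℝ), (u₀.2:ℝ)) z := by
    intro z
    rw [hddef]
    simp only [dot2]
    push_cast
    ring
  -- apply key_arith
  have hkey := key_arith m (dot2 ((v.1:ℝ), (v.2:ℝ)) Y) (dot2 ((v.1:ℝ), (v.2:ℝ)) X)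
    (dot2 ((u₀.1:ℝ), (u₀.2:ℝ)) Y) (dot2 ((v.1:ℝ), (v.2:ℝ)) Z) (dot2 ((u₀.1:ℝ), (u₀.2:ℝ)) Z)
    hmpos hv_ge ha0 ham
    (hu₀bound Y hYL).1 (hu₀bound Y hYL).2 (hu₀bound Z hZL).1 (hu₀bound Z hZL).2
    (hvbound Z hZL).1 (hvbound Z hZL).2
    (by rw [← hdsub Z]; exact hd_ge)
    (by rw [← hdsub Y, ← hdsub Z]; exact hZmax Y hYL)
  -- epsilon identity
  have hdeR : (v.1:ℝ) * (u₀.2:ℝ) - (v.2:ℝ) * (u₀.1:ℝ) = ((e:ℤ):ℝ) := by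
    exact_mod_cast congrArg (Int.cast : ℤ → ℝ) hdet
  have hid : ∀ x y : ℝ × ℝ,
      dot2 ((v.1:ℝ), (v.2:ℝ)) x * dot2 ((u₀.1:ℝ), (u₀.2:ℝ)) y
        - dot2 ((u₀.1:ℝ), (u₀.2:ℝ)) x * dot2 ((v.1:ℝ), (v.2:ℝ)) y = ((e:ℤ):ℝ) * crs x y := by
    intro x y
    rw [← hdeR]
    simp only [dot2, crs]
    ring
  set F : ℝ := (dot2 ((v.1:ℝ), (v.2:ℝ)) Z * dot2 ((u₀.1:ℝ), (u₀.2:ℝ)) Y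
      - dot2 ((u₀.1:ℝ), (u₀.2:ℝ)) Z * dot2 ((v.1:ℝ), (v.2:ℝ)) Y)
    + (dot2 ((v.1:ℝ), (v.2:ℝ)) Y * dot2 ((u₀.1:ℝ), (u₀.2:ℝ)) X
      - dot2 ((u₀.1:ℝ), (u₀.2:ℝ)) Y * dot2 ((v.1:ℝ), (v.2:ℝ)) X)
    - (dot2 ((v.1:ℝ), (v.2:ℝ)) X * dot2 ((u₀.1:ℝ), (u₀.2:ℝ)) Z
      - dot2 ((u₀.1:ℝ), (u₀.2:ℝ)) X * dot2 ((v.1:ℝ), (v.2:ℝ)) Z) with hFdef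
  have hF : 2 * m ^ 2 ≤ F := by
    rw [hFdef, hXm]
    ring_nf
    ring_nf at hkey
    linarith [hkey]
  have hFe : F = ((e:ℤ):ℝ) * (crs Z Y + crs Y X - crs X Z) := by
    rw [hFdef, mul_sub, mul_add, ← hid Z Y, ← hid Y X, ← hid X Z]
  have hvol : ENNReal.ofReal (2 * m ^ 2) ≤ volume L := by
    rcases heR with he1 | he1
    · have hE : crs Z Y + crs Y X - crs X Z = F := by
        rw [hFe, he1, one_mul]
      calc ENNReal.ofReal (2 * m ^ 2) ≤ ENNReal.ofReal (crs Z Y + crs Y X - crs X Z) := by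
            apply ENNReal.ofReal_le_ofReal
            rw [hE]
            exact hF
        _ ≤ volume L := sal_hex hLconv hLsym hL0 hZL hYL hXL
    · have hE : crs X Y + crs Y Z - crs Z X = F := by
        have hanti : ∀ x y : ℝ × ℝ, crs x y = -crs y x := by
          intro x y
          simp only [crs]
          ring
        rw [hFe, he1]
        rw [hanti X Y, hanti Y Z, hanti Z X]
        ring
      calc ENNReal.ofReal (2 * m ^ 2) ≤ ENNReal.ofReal (crs X Y + crs Y Z - crs Z X) := by
            apply ENNReal.ofReal_le_ofReal
            rw [hE]
            exact hF
        _ ≤ volume L := sal_hex hLconv hLsym hL0 hXL hYL hZL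
  rw [hLvol] at hvol
  have hfinal : 2 * m ^ 2 ≤ (volume K).toReal := (ENNReal.ofReal_le_iff_le_toReal hfin).1 hvol
  have heq : latticeWidth K ^ 2 / 2 = 2 * m ^ 2 := by rw [hmdef]; ring
  linarith

end SalHelpers
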